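/- If ‖λ̄‖ > C, then Σ_{j∈S} e_j ‖y_j − ȳ‖² ≤ Σ_{j∈S} e_j ‖λ_j − λ̄‖² − (1 − Σ_{j∈S^c} e_j)·(‖λ̄‖ − C)² − Σ_{j∈S^c} e_j (‖λ_j‖ − ‖λ̄‖)². -/

import Mathlib

/-- The clipping operator `clip_C(v) = min(1, C/‖v‖)·v` (with `clip_C(0) = 0`,
since in Lean `C/0 = 0`). -/
noncomputable def clip {E : Type*} [NormedAddCommGroup E] [InnerProductSpace ℝ E]
    (C : ℝ) (v : E) : E := min 1 (C / ‖v‖) • v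

lemma clip_eq_of_le {E : Type*} [NormedAddCommGroup E] [InnerProductSpace ℝ E]
    {C : ℝ} {v : E} (h : ‖v‖ ≤ C) : clip C v = v := by
  rcases eq_or_ne v 0 with rfl | hv
  · simp [clip]
  · have h0 : 0 < ‖v‖ := norm_pos_iff.2 hv
    have : (1 : ℝ) ≤ C / ‖v‖ := (one_le_div h0).2 h
    simp [clip, min_eq_left this]

lemma clip_eq_of_gt {E : Type*} [NormedAddCommGroup E] [InnerProductSpace ℝ E]
    {C : ℝ} {v : E} (hC : 0 ≤ C) (h : C < ‖v‖) : clip C v = (C / ‖v‖) • v := by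
  have h0 : 0 < ‖v‖ := lt_of_le_of_lt hC h
  have : C / ‖v‖ ≤ 1 := (div_le_one h0).2 h.le
  simp [clip, min_eq_right this]

lemma clip_norm_le {E : Type*} [NormedAddCommGroup E] [InnerProductSpace ℝ E]
    {C : ℝ} (hC : 0 ≤ C) (v : E) : ‖clip C v‖ ≤ C := by
  rcases le_or_gt ‖v‖ C with h | h
  · rw [clip_eq_of_le h]; exact h
  · have h0 : 0 < ‖v‖ := lt_of_le_of_lt hC h
    rw [clip_eq_of_gt hC h, norm_smul, Real.norm_eq_abs,
      abs_of_nonneg (div_nonneg hC h0.le), div_mul_cancel₀ _ h0.ne']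

/-- Key pointwise inequality for a vector being clipped. -/
lemma clip_key {E : Type*} [NormedAddCommGroup E] [InnerProductSpace ℝ E]
    {C : ℝ} (hC : 0 ≤ C) {a : E} (ha : C < ‖a‖) (b : E) :
    ‖clip C a - b‖ ^ 2 ≤ ‖a - b‖ ^ 2 - (‖a‖ - ‖b‖) ^ 2 + (‖b‖ - C) ^ 2 := by
  have h0 : 0 < ‖a‖ := lt_of_le_of_lt hC ha
  rw [clip_eq_of_gt hC ha]
  have hnorm : ‖(C / ‖a‖) • a‖ = C := by
    rw [norm_smul, Real.norm_eq_abs, abs_of_nonneg (div_nonneg hC h0.le),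
      div_mul_cancel₀ _ h0.ne']
  have e1 : ‖(C / ‖a‖) • a - b‖ ^ 2
      = C ^ 2 - 2 * ((C / ‖a‖) * inner ℝ a b) + ‖b‖ ^ 2 := by
    rw [norm_sub_sq_real, hnorm, real_inner_smul_left]
  have e2 : ‖a - b‖ ^ 2 = ‖a‖ ^ 2 - 2 * inner ℝ a b + ‖b‖ ^ 2 := norm_sub_sq_real a b
  have hab : (inner ℝ a b : ℝ) ≤ ‖a‖ * ‖b‖ := real_inner_le_norm a b
  have h2 : 0 ≤ 1 - C / ‖a‖ := by
    rw [sub_nonneg]; exact (div_le_one h0).2 ha.le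
  have h3 : (1 - C / ‖a‖) * (inner ℝ a b : ℝ) ≤ (1 - C / ‖a‖) * (‖a‖ * ‖b‖) :=
    mul_le_mul_of_nonneg_left hab h2
  have h4 : C / ‖a‖ * ‖a‖ = C := div_mul_cancel₀ _ h0.ne'
  have h5 : C / ‖a‖ * (‖a‖ * ‖b‖) = C * ‖b‖ := by rw [← mul_assoc, h4]
  rw [e1, e2]
  nlinarith [h3, h5, norm_nonneg b]


/-- **Variance-reduction property of clipping, case ‖λ̄‖ > C
(Lemma, Case 2).** -/
theorem clipping_variance_reduction_large_mean
    {E : Type*} [NormedAddCommGroup E] [InnerProductSpace ℝ E]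
    {ι : Type*} [DecidableEq ι] (S : Finset ι) (hS : S.Nonempty)
    (e : ι → ℝ) (he : ∀ j ∈ S, 0 ≤ e j) (hsum : ∑ j ∈ S, e j = 1)
    (lam : ι → E) (C : ℝ) (hC : 0 ≤ C)
    (hmean : C < ‖∑ j ∈ S, e j • lam j‖) :
    ∑ j ∈ S, e j * ‖clip C (lam j) - ∑ k ∈ S, e k • clip C (lam k)‖ ^ 2
      ≤ ∑ j ∈ S, e j * ‖lam j - ∑ k ∈ S, e k • lam k‖ ^ 2
        - (1 - ∑ j ∈ S.filter (fun j => C < ‖lam j‖), e j)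
            * (‖∑ j ∈ S, e j • lam j‖ - C) ^ 2
        - ∑ j ∈ S.filter (fun j => C < ‖lam j‖),
            e j * (‖lam j‖ - ‖∑ k ∈ S, e k • lam k‖) ^ 2 := by
  set lbar := ∑ k ∈ S, e k • lam k with hlbar
  set ybar := ∑ k ∈ S, e k • clip C (lam k) with hybar
  set y := fun j => clip C (lam j) with hy
  -- mean of clipped vectors has norm ≤ C
  have hybC : ‖ybar‖ ≤ C := by
    calc ‖ybar‖ ≤ ∑ k ∈ S, ‖e k • y k‖ := norm_sum_le _ _
    _ ≤ ∑ k ∈ S, e k * C := by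
        apply Finset.sum_le_sum
        intro k hk
        rw [norm_smul, Real.norm_eq_abs, abs_of_nonneg (he k hk)]
        exact mul_le_mul_of_nonneg_left (clip_norm_le hC _) (he k hk)
    _ = C := by rw [← Finset.sum_mul, hsum, one_mul]
  have hyl : (‖lbar‖ - C) ^ 2 ≤ ‖ybar - lbar‖ ^ 2 := by
    have h1 : ‖lbar‖ - C ≤ ‖ybar - lbar‖ := by
      have := norm_sub_norm_le lbar ybar
      rw [norm_sub_rev] at this
      linarith
    exact pow_le_pow_left₀ (by linarith) h1 2
  -- the centered sum
  have hkey : ∑ j ∈ S, e j • (y j - lbar) = ybar - lbar := by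
    simp only [smul_sub]
    rw [Finset.sum_sub_distrib, ← Finset.sum_smul, hsum, one_smul]
  have inner_eq : ∑ j ∈ S, e j * (inner ℝ (y j - lbar) (ybar - lbar) : ℝ)
      = ‖ybar - lbar‖ ^ 2 := by
    have : ∑ j ∈ S, e j * (inner ℝ (y j - lbar) (ybar - lbar) : ℝ)
        = (inner ℝ (∑ j ∈ S, e j • (y j - lbar)) (ybar - lbar) : ℝ) := by
      rw [sum_inner]
      exact Finset.sum_congr rfl fun j hj => (real_inner_smul_left _ _ _).symm
    rw [this, hkey, real_inner_self_eq_norm_sq]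
  -- variance identity
  have var_id : ∑ j ∈ S, e j * ‖y j - ybar‖ ^ 2
      = ∑ j ∈ S, e j * ‖y j - lbar‖ ^ 2 - ‖ybar - lbar‖ ^ 2 := by
    have term : ∀ j, ‖y j - ybar‖ ^ 2
        = ‖y j - lbar‖ ^ 2 - 2 * (inner ℝ (y j - lbar) (ybar - lbar) : ℝ)
          + ‖ybar - lbar‖ ^ 2 := by
      intro j
      rw [← sub_sub_sub_cancel_right (y j) ybar lbar, norm_sub_sq_real]
    calc ∑ j ∈ S, e j * ‖y j - ybar‖ ^ 2
        = (∑ j ∈ S, e j * ‖y j - lbar‖ ^ 2)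
          - 2 * (∑ j ∈ S, e j * (inner ℝ (y j - lbar) (ybar - lbar) : ℝ))
          + (∑ j ∈ S, e j) * ‖ybar - lbar‖ ^ 2 := by
          rw [Finset.mul_sum, ← Finset.sum_sub_distrib, Finset.sum_mul,
            ← Finset.sum_add_distrib]
          exact Finset.sum_congr rfl fun j hj => by rw [term j]; ring
      _ = _ := by rw [inner_eq, hsum]; ring
  -- pointwise bound summed
  have step2 : ∑ j ∈ S, e j * ‖y j - lbar‖ ^ 2
      ≤ ∑ j ∈ S, e j * ‖lam j - lbar‖ ^ 2
        + (∑ j ∈ S.filter (fun j => C < ‖lam j‖), e j) * (‖lbar‖ - C) ^ 2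
        - ∑ j ∈ S.filter (fun j => C < ‖lam j‖),
            e j * (‖lam j‖ - ‖lbar‖) ^ 2 := by
    have : ∑ j ∈ S, e j * ‖y j - lbar‖ ^ 2
        ≤ ∑ j ∈ S, (e j * ‖lam j - lbar‖ ^ 2
            + (if C < ‖lam j‖ then
                e j * ((‖lbar‖ - C) ^ 2 - (‖lam j‖ - ‖lbar‖) ^ 2) else 0)) := by
      apply Finset.sum_le_sum
      intro j hj
      by_cases h : C < ‖lam j‖
      · rw [if_pos h]
        have := clip_key hC h lbar
        nlinarith [mul_le_mul_of_nonneg_left this (he j hj)]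
      · rw [if_neg h, hy]
        simp only
        rw [clip_eq_of_le (not_lt.1 h), add_zero]
    refine this.trans_eq ?_
    rw [Finset.sum_add_distrib, ← Finset.sum_filter]
    simp only [mul_sub]
    rw [Finset.sum_sub_distrib, ← Finset.sum_mul]
    ring
  have hmean' : C < ‖lbar‖ := hmean
  linarith [var_id, step2, hyl,
    mul_le_mul_of_nonneg_right (le_refl (1:ℝ)) (sq_nonneg (‖lbar‖ - C))]
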